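/- Let M : Matrix (Fin m) (Fin n) ℤ have all entries in {0, 1}, and suppose there exists U ⊆ Fin m such that: (i) for every column j ∈ Fin n there is i ∈ U with M i j = 1, and (ii) every row i ∈ U contains exactly two entries equal to 1 (Σ_j M i j = 2). Then ker_ℤ(M) contains no nonzero componentwise-nonnegative vector, and no element of the Graver basis Gr(M) admits a proper semiconformal decomposition in ker_ℤ(M). -/

import Mathlib

/-- The integer kernel of an integer matrix. -/
def kerZ {m n : ℕ} (A : Matrix (Fin m) (Fin n) ℤ) : Set (Fin n → ℤ) :=
  {u | A.mulVec u = 0}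

/-- The componentwise positive part `u⁺` of an integer vector. -/
def posPartZ {n : ℕ} (u : Fin n → ℤ) : Fin n → ℤ := fun i => max (u i) 0

/-- The componentwise negative part `u⁻` of an integer vector. -/
def negPartZ {n : ℕ} (u : Fin n → ℤ) : Fin n → ℤ := fun i => max (-u i) 0

/-- `u = v + w` is a proper conformal decomposition within `kerZ A`. -/
def IsProperConformalDecomp {m n : ℕ} (A : Matrix (Fin m) (Fin n) ℤ)
    (u v w : Fin n → ℤ) : Prop :=
  v ∈ kerZ A ∧ w ∈ kerZ A ∧ v ≠ 0 ∧ w ≠ 0 ∧ u = v + w ∧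
    posPartZ u = posPartZ v + posPartZ w ∧ negPartZ u = negPartZ v + negPartZ w

/-- `u` belongs to the Graver basis of `A`: it is a nonzero element of the integer
kernel admitting no proper conformal decomposition. -/
def InGraver {m n : ℕ} (A : Matrix (Fin m) (Fin n) ℤ) (u : Fin n → ℤ) : Prop :=
  u ∈ kerZ A ∧ u ≠ 0 ∧ ¬ ∃ v w, IsProperConformalDecomp A u v w

/-- `u = v + w` is a proper semiconformal decomposition within `kerZ A`. -/
def IsProperSemiconformalDecomp {m n : ℕ} (A : Matrix (Fin m) (Fin n) ℤ)
    (u v w : Fin n → ℤ) : Prop :=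
  v ∈ kerZ A ∧ w ∈ kerZ A ∧ v ≠ 0 ∧ w ≠ 0 ∧ u = v + w ∧
    ∀ i, (0 < v i → 0 ≤ w i) ∧ (w i < 0 → v i ≤ 0)

theorem two_regular_cover_implies_graver_indispensable {m n : ℕ}
    (M : Matrix (Fin m) (Fin n) ℤ)
    (h01 : ∀ i j, M i j = 0 ∨ M i j = 1)
    (U : Set (Fin m))
    (hcover : ∀ j : Fin n, ∃ i ∈ U, M i j = 1)
    (hdeg2 : ∀ i ∈ U, ∑ j, M i j = 2) :
    (¬ ∃ v ∈ kerZ M, v ≠ 0 ∧ ∀ j, 0 ≤ v j) ∧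
    (¬ ∃ u v w : Fin n → ℤ, InGraver M u ∧
      IsProperSemiconformalDecomp M u v w) := by
  have edge : ∀ j : Fin n, ∃ k, k ≠ j ∧ ∀ x ∈ kerZ M, x j + x k = 0 := by
    intro j
    obtain ⟨i, hiU, hij⟩ := hcover j
    have hsum := hdeg2 i hiU
    set s : Finset (Fin n) := Finset.univ.filter (fun l => M i l = 1) with hs
    have hsumcard : ∑ l, M i l = (s.card : ℤ) := by
      rw [← Finset.sum_filter_add_sum_filter_not Finset.univ (fun l => M i l = 1)]
      have h1 : ∑ l ∈ s, M i l = (s.card : ℤ) := by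
        rw [Finset.sum_congr rfl (fun l hl => (Finset.mem_filter.mp hl).2)]
        simp [hs]
      have h2 : ∑ l ∈ Finset.univ.filter (fun l => ¬ M i l = 1), M i l = 0 := by
        apply Finset.sum_eq_zero
        intro l hl
        rcases h01 i l with h | h
        · exact h
        · exact absurd h (Finset.mem_filter.mp hl).2
      rw [← hs] at *
      rw [h1, h2, add_zero]
    have hcard : s.card = 2 := by
      have : (s.card : ℤ) = 2 := by omega
      exact_mod_cast this
    obtain ⟨a, b, hab, habs⟩ := Finset.card_eq_two.mp hcard
    have hjs : j ∈ s := by simp [hs, hij]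
    have key : ∀ k, k ≠ j → s = {j, k} → ∃ k', k' ≠ j ∧ ∀ x ∈ kerZ M, x j + x k' = 0 := by
      intro k hk hsk
      refine ⟨k, hk, fun x hx => ?_⟩
      have hrow : ∑ l, M i l * x l = 0 := congrFun hx i
      have : ∑ l, M i l * x l = x j + x k := by
        rw [← Finset.sum_filter_add_sum_filter_not Finset.univ (fun l => M i l = 1), ← hs]
        have h1 : ∑ l ∈ s, M i l * x l = ∑ l ∈ s, x l := by
          apply Finset.sum_congr rfl
          intro l hl
          rw [(Finset.mem_filter.mp hl).2, one_mul]
        have h2 : ∑ l ∈ Finset.univ.filter (fun l => ¬ M i l = 1), M i l * x l = 0 := by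
          apply Finset.sum_eq_zero
          intro l hl
          rcases h01 i l with h | h
          · rw [h, zero_mul]
          · exact absurd h (Finset.mem_filter.mp hl).2
        rw [h1, h2, add_zero, hsk, Finset.sum_pair (Ne.symm hk)]
      omega
    rw [habs] at hjs
    rcases Finset.mem_insert.mp hjs with h | h
    · exact key b (fun hbj => hab (h ▸ hbj.symm)) (h ▸ habs)
    · have h' : j = b := Finset.mem_singleton.mp h
      subst h'
      exact key a (fun haj => hab haj) (by rw [habs, Finset.pair_comm])
  constructor
  · rintro ⟨v, hv, hne, hnn⟩
    apply hne
    funext j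
    obtain ⟨k, hk, he⟩ := edge j
    have := he v hv
    have := hnn j
    have := hnn k
    simp only [Pi.zero_apply]
    omega
  · rintro ⟨u, v, w, ⟨huK, hune, hnoconf⟩, hvK, hwK, hvne, hwne, hdec, hsemi⟩
    apply hnoconf
    refine ⟨v, w, hvK, hwK, hvne, hwne, hdec, ?_, ?_⟩
    all_goals {
      funext j
      obtain ⟨k, hk, he⟩ := edge j
      have hvjk := he v hvK
      have hwjk := he w hwK
      have h1 := hsemi j
      have h2 := hsemi k
      have huj : u j = v j + w j := by rw [hdec]; rfl
      simp only [posPartZ, negPartZ, Pi.add_apply]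
      omega
    }
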